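/- (Positive definiteness of the matrix Q.) Let L₂ ≥ 0 and let k_p, k_d, k_i, L₁ satisfy k_p − L₁ > 0, k_d − L₂ > 0, k_i > 0 and [(k_p − L₁)(k_d − L₂) − k_i]² > L₂² k_i (k_d − L₂) with (k_p − L₁)(k_d − L₂) − k_i > 0, and set μ = 2((k_p − L₁)(k_d − L₂) + k_i)/(4(k_p − L₁) + L₂²). Then for all real numbers φ, ψ, a with φ ≥ k_p − L₁, ψ ≥ k_d − L₂ and |a| ≤ L₂, the symmetric 2×2 matrix Q = [[−k_i + μφ, −μa/2], [−μa/2, −μ + ψ]] is positive definite. -/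

import Mathlib

set_option maxHeartbeats 1000000


/-- **Positive definiteness of the matrix `Q`.**
Under the stated hypotheses on `k_p, k_d, k_i, L₁, L₂` and with
`μ = 2((k_p − L₁)(k_d − L₂) + k_i)/(4(k_p − L₁) + L₂²)`, for all `φ ≥ k_p − L₁`,
`ψ ≥ k_d − L₂` and `|a| ≤ L₂`, the matrix
`Q = [[−k_i + μφ, −μa/2], [−μa/2, −μ + ψ]]` is positive definite. -/
theorem matrix_Q_posdef
    (kp kd ki L1 L2 μ : ℝ)
    (hL2 : 0 ≤ L2)
    (h1 : 0 < kp - L1) (h2 : 0 < kd - L2) (h3 : 0 < ki)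
    (h4 : 0 < (kp - L1) * (kd - L2) - ki)
    (h5 : ((kp - L1) * (kd - L2) - ki) ^ 2 > L2 ^ 2 * (ki * (kd - L2)))
    (hμ : μ = 2 * ((kp - L1) * (kd - L2) + ki) / (4 * (kp - L1) + L2 ^ 2)) :
    ∀ φ ψ a : ℝ, kp - L1 ≤ φ → kd - L2 ≤ ψ → |a| ≤ L2 →
      (!![-ki + μ * φ, -(μ * a) / 2;
          -(μ * a) / 2, -μ + ψ]).PosDef := by
  intro φ ψ a hφ hψ ha
  set p := kp - L1 with hp
  set d := kd - L2 with hd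
  have hS : (0:ℝ) < 4 * p + L2 ^ 2 := by positivity
  have hμS : μ * (4 * p + L2 ^ 2) = 2 * (p * d + ki) := by
    rw [hμ]; field_simp
  have hμpos : 0 < μ := by nlinarith
  -- key : 2 p (p d - ki) > ki L2²
  have hkey : ki * L2 ^ 2 < 2 * p * (p * d - ki) := by
    nlinarith [mul_pos h4 h2, sq_nonneg (L2 * (p * d + ki)), mul_pos h2 h3,
      mul_pos hS (sub_pos.mpr h5), mul_nonneg (sq_nonneg L2) (mul_pos h3 h2).le]
  have hA : ki < μ * p := by nlinarith
  have hC : μ < d := by nlinarith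
  have ha2 : a ^ 2 ≤ L2 ^ 2 := by
    rw [← sq_abs a]; exact pow_le_pow_left₀ (abs_nonneg a) ha 2
  -- determinant positivity at the worst corner
  have hdet0 : μ ^ 2 * L2 ^ 2 < 4 * ((μ * p - ki) * (d - μ)) := by
    nlinarith [mul_pos hS (sub_pos.mpr h5), sq_nonneg (μ * (4 * p + L2 ^ 2)),
      mul_pos hS hS]
  have hφ' : μ * p ≤ μ * φ := mul_le_mul_of_nonneg_left hφ hμpos.le
  have hA' : ki < μ * φ := lt_of_lt_of_le hA hφ'
  have hC' : μ < ψ := lt_of_lt_of_le hC hψ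
  have hdet : μ ^ 2 * a ^ 2 < 4 * ((μ * φ - ki) * (ψ - μ)) := by
    have h1' : (μ * p - ki) * (d - μ) ≤ (μ * φ - ki) * (ψ - μ) := by
      exact mul_le_mul (sub_le_sub_right hφ' ki) (sub_le_sub_right hψ μ)
        (by linarith) (by linarith)
    have h2' : μ ^ 2 * a ^ 2 ≤ μ ^ 2 * L2 ^ 2 :=
      mul_le_mul_of_nonneg_left ha2 (sq_nonneg μ)
    linarith
  rw [Matrix.posDef_iff_dotProduct_mulVec]
  constructor
  · show _ = _
    ext i j
    fin_cases i <;> fin_cases j <;>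
      simp [Matrix.conjTranspose, Matrix.transpose]
  · intro x hx
    have hx0 : x 0 ≠ 0 ∨ x 1 ≠ 0 := by
      by_contra h
      push_neg at h
      exact hx (funext fun i => by fin_cases i <;> simp [h.1, h.2])
    simp only [dotProduct, Matrix.mulVec, Fin.sum_univ_two,
      Matrix.cons_val', Matrix.cons_val_zero, Matrix.cons_val_one,
      Matrix.head_cons, Matrix.head_fin_const, Matrix.empty_val',
      Matrix.cons_val_fin_one, Matrix.of_apply, star_trivial]
    have key : 0 < (μ * φ - ki) * x 0 ^ 2 - μ * a * x 0 * x 1 + (ψ - μ) * x 1 ^ 2 := by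
      have hApos : 0 < μ * φ - ki := by linarith
      by_cases hx1 : x 1 = 0
      · have h0 : x 0 ≠ 0 := by
          rcases hx0 with h0 | h0
          · exact h0
          · exact absurd hx1 h0
        have : 0 < x 0 ^ 2 := by positivity
        rw [hx1]
        ring_nf
        nlinarith [mul_pos hApos this]
      · have hx1sq : 0 < x 1 ^ 2 := by positivity
        have hdet' : 0 < 4 * ((μ * φ - ki) * (ψ - μ)) - μ ^ 2 * a ^ 2 := by linarith
        nlinarith [sq_nonneg (2 * (μ * φ - ki) * x 0 - μ * a * x 1),
          mul_pos hdet' hx1sq, sq_nonneg (x 0)]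
    nlinarith [key]
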